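/- If u(x) is a polynomial of degree l whose roots t_1,…,t_l are simple and satisfy the Bethe ansatz equations ∑_{s=1}^n m_s/(t_j−z_s) = ∑_{k≠j} 2/(t_j−t_k) for all j, and no t_j equals any z_s, then H(x) := (−F(x)u''(x) − G(x)u'(x))/u(x) is a polynomial of degree at most n−2. -/
import Mathlib


open Polynomial Finset

lemma aux_derivative_prod {ι : Type*} [DecidableEq ι] (s : Finset ι) (g : ι → ℂ) :
    derivative (∏ i ∈ s, (X - C (g i))) = ∑ i ∈ s, ∏ k ∈ s.erase i, (X - C (g k)) := by
  classical
  induction s using Finset.induction_on with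
  | empty => simp
  | @insert a s ha ih =>
    rw [Finset.prod_insert ha, derivative_mul, ih, Finset.sum_insert ha, Finset.erase_insert ha]
    simp only [derivative_sub, derivative_X, derivative_C, sub_zero, one_mul]
    rw [Finset.mul_sum]
    congr 1
    refine Finset.sum_congr rfl fun i hi => ?_
    rw [Finset.erase_insert_of_ne (by rintro rfl; exact ha hi),
        Finset.prod_insert (fun h => ha (Finset.mem_of_mem_erase h))]

/-- If `u = ∏ (X - t j)` has simple roots satisfying the Bethe ansatz
equations, none equal to any `z_s`, then `H := (-F u'' - G u')/u` is a polynomial of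
degree at most `n - 2`; i.e. `u` divides `-F u'' - G u'` with quotient of degree `≤ n-2`. -/
theorem stmt_1 (n l : ℕ) (z : Fin n → ℂ) (hz : Function.Injective z)
    (m : Fin n → ℂ) (t : Fin l → ℂ) (ht : Function.Injective t)
    (htz : ∀ j s, t j ≠ z s)
    (hBethe : ∀ j, ∑ s, m s / (t j - z s) = ∑ k ∈ univ.erase j, 2 / (t j - t k)) :
    ∃ H : Polynomial ℂ, H.degree ≤ (n - 2 : ℕ) ∧
      -((∏ s, (X - C (z s))) * derivative (derivative (∏ j, (X - C (t j)))))
        - (-(∑ s, C (m s) * ∏ k ∈ univ.erase s, (X - C (z k)))) *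
            derivative (∏ j, (X - C (t j)))
      = H * (∏ j, (X - C (t j))) := by
  classical
  rcases eq_or_ne l 0 with rfl | hl0
  · refine ⟨0, by simp, ?_⟩
    simp
  set u : ℂ[X] := ∏ j, (X - C (t j)) with hu
  set F : ℂ[X] := ∏ s, (X - C (z s)) with hFdef
  set S : ℂ[X] := ∑ s, C (m s) * ∏ k ∈ univ.erase s, (X - C (z k)) with hSdef
  set P : ℂ[X] := -(F * derivative (derivative u)) - (-S) * derivative u with hPdef
  -- derivative formulas
  have hu' : derivative u = ∑ i, ∏ k ∈ univ.erase i, (X - C (t k)) :=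
    aux_derivative_prod univ t
  have hu'' : derivative (derivative u) =
      ∑ i, ∑ k ∈ univ.erase i, ∏ m' ∈ (univ.erase i).erase k, (X - C (t m')) := by
    rw [hu', derivative_sum]
    exact Finset.sum_congr rfl fun i _ => aux_derivative_prod _ t
  -- evaluations at t j
  have hBeval : ∀ j, eval (t j) (derivative u) = ∏ k ∈ univ.erase j, (t j - t k) := by
    intro j
    rw [hu']
    simp only [eval_finset_sum, eval_prod, eval_sub, eval_X, eval_C]
    rw [Finset.sum_eq_single j]
    · intro i _ hij
      exact Finset.prod_eq_zero (Finset.mem_erase.2 ⟨hij.symm, Finset.mem_univ j⟩) (sub_self _)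
    · intro h; exact absurd (Finset.mem_univ j) h
  have hCeval : ∀ j, eval (t j) (derivative (derivative u)) =
      2 * ∑ k ∈ univ.erase j, ∏ m' ∈ (univ.erase j).erase k, (t j - t m') := by
    intro j
    rw [hu'']
    simp only [eval_finset_sum, eval_prod, eval_sub, eval_X, eval_C]
    rw [← Finset.add_sum_erase univ _ (Finset.mem_univ j)]
    have h2 : ∀ i ∈ univ.erase j,
        (∑ k ∈ (univ.erase i), ∏ m' ∈ ((univ.erase i)).erase k, (t j - t m'))
        = ∏ m' ∈ (univ.erase j).erase i, (t j - t m') := by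
      intro i hi
      have hij : i ≠ j := (Finset.mem_erase.1 hi).1
      rw [Finset.sum_eq_single j]
      · rw [Finset.erase_right_comm]
      · intro k hk hkj
        refine Finset.prod_eq_zero (Finset.mem_erase.2 ⟨hkj.symm, ?_⟩) (sub_self _)
        exact Finset.mem_erase.2 ⟨hij.symm, Finset.mem_univ j⟩
      · intro h
        exact absurd (Finset.mem_erase.2 ⟨hij.symm, Finset.mem_univ j⟩) h
    rw [Finset.sum_congr rfl h2]
    ring
  -- the key identity from the Bethe equations
  have key : ∀ j, (∑ s, m s * ∏ r ∈ univ.erase s, (t j - z r)) *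
        (∏ k ∈ univ.erase j, (t j - t k))
      = (∏ s, (t j - z s)) *
        (2 * ∑ k ∈ univ.erase j, ∏ m' ∈ (univ.erase j).erase k, (t j - t m')) := by
    intro j
    have hA : ∀ s, t j - z s ≠ 0 := fun s => sub_ne_zero.2 (htz j s)
    have hT : ∀ k ∈ univ.erase j, t j - t k ≠ 0 := by
      intro k hk
      refine sub_ne_zero.2 fun h => (Finset.mem_erase.1 hk).1 ?_
      exact (ht h).symm
    have e1 : (∑ s, m s / (t j - z s)) * (∏ s, (t j - z s))
        = ∑ s, m s * ∏ r ∈ univ.erase s, (t j - z r) := by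
      rw [Finset.sum_mul]
      refine Finset.sum_congr rfl fun s _ => ?_
      rw [← Finset.mul_prod_erase univ _ (Finset.mem_univ s), ← mul_assoc,
        div_mul_cancel₀ _ (hA s)]
    have e2 : (∑ k ∈ univ.erase j, 2 / (t j - t k)) * (∏ k ∈ univ.erase j, (t j - t k))
        = ∑ k ∈ univ.erase j, 2 * ∏ m' ∈ (univ.erase j).erase k, (t j - t m') := by
      rw [Finset.sum_mul]
      refine Finset.sum_congr rfl fun k hk => ?_
      rw [← Finset.mul_prod_erase _ _ hk, ← mul_assoc, div_mul_cancel₀ _ (hT k hk)]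
    calc (∑ s, m s * ∏ r ∈ univ.erase s, (t j - z r)) * (∏ k ∈ univ.erase j, (t j - t k))
        = ((∑ s, m s / (t j - z s)) * (∏ s, (t j - z s))) * (∏ k ∈ univ.erase j, (t j - t k)) := by
          rw [e1]
      _ = ((∑ k ∈ univ.erase j, 2 / (t j - t k)) * (∏ k ∈ univ.erase j, (t j - t k)))
            * (∏ s, (t j - z s)) := by rw [hBethe j]; ring
      _ = (∑ k ∈ univ.erase j, 2 * ∏ m' ∈ (univ.erase j).erase k, (t j - t m'))
            * (∏ s, (t j - z s)) := by rw [e2]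
      _ = (∏ s, (t j - z s)) *
            (2 * ∑ k ∈ univ.erase j, ∏ m' ∈ (univ.erase j).erase k, (t j - t m')) := by
          rw [Finset.mul_sum, Finset.sum_mul]
          rw [Finset.mul_sum]
          refine Finset.sum_congr rfl fun k _ => ?_
          ring
  -- divisibility
  have hdvd : u ∣ P := by
    rw [hu]
    refine Finset.prod_dvd_of_coprime ((pairwise_coprime_X_sub_C ht).set_pairwise _)
      fun j _ => ?_
    rw [dvd_iff_isRoot, IsRoot]
    have hFe : eval (t j) F = ∏ s, (t j - z s) := by
      rw [hFdef]; simp [eval_prod]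
    have hSe : eval (t j) S = ∑ s, m s * ∏ r ∈ univ.erase s, (t j - z r) := by
      rw [hSdef]; simp [eval_finset_sum, eval_prod]
    rw [hPdef]
    simp only [eval_sub, eval_neg, eval_mul]
    rw [hFe, hSe, hBeval j, hCeval j]
    have := key j
    ring_nf
    ring_nf at this
    linear_combination this
  obtain ⟨H, hH⟩ := hdvd
  refine ⟨H, ?_, by rw [hH]; ring⟩
  by_cases h0 : H = 0
  · simp [h0]
  -- degree estimate
  have hu_monic : u.Monic := monic_prod_of_monic _ _ fun j _ => monic_X_sub_C (t j)
  have hul : u.natDegree = l := by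
    rw [hu, natDegree_prod _ _ fun i _ => X_sub_C_ne_zero (t i)]
    simp
  have hFl : F.natDegree = n := by
    rw [hFdef, natDegree_prod _ _ fun i _ => X_sub_C_ne_zero (z i)]
    simp
  have hSl : S.natDegree ≤ n - 1 := by
    rw [hSdef]
    refine (natDegree_sum_le _ _).trans ?_
    rw [Finset.fold_max_le]
    refine ⟨Nat.zero_le _, fun s _ => ?_⟩
    refine (natDegree_mul_le).trans ?_
    rw [natDegree_C, natDegree_prod _ _ fun i _ => X_sub_C_ne_zero (z i)]
    simp [Finset.card_erase_of_mem]
  have hu'l : (derivative u).natDegree ≤ l - 1 := by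
    have := natDegree_derivative_le u
    omega
  have hPl : P.natDegree ≤ (n - 2) + l := by
    have hterm1 : (S * derivative u).natDegree ≤ (n - 1) + (l - 1) :=
      natDegree_mul_le.trans (add_le_add hSl hu'l)
    rcases le_or_gt l 1 with hl1 | hl1
    · have hdd : derivative (derivative u) = 0 := by
        have h1 : (derivative u).natDegree = 0 := by omega
        rw [eq_C_of_natDegree_le_zero h1.le, derivative_C]
      have : P = S * derivative u := by rw [hPdef, hdd]; ring
      rw [this]
      omega
    · have hterm2 : (F * derivative (derivative u)).natDegree ≤ n + (l - 2) := by
        refine natDegree_mul_le.trans (add_le_add hFl.le ?_)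
        have := natDegree_derivative_le (derivative u)
        omega
      have : P = S * derivative u - F * derivative (derivative u) := by rw [hPdef]; ring
      rw [this]
      refine (natDegree_sub_le _ _).trans ?_
      simp only [max_le_iff]
      omega
  have hP0 : P ≠ 0 := by
    rw [hH]
    exact mul_ne_zero hu_monic.ne_zero h0
  have hHl : H.natDegree ≤ n - 2 := by
    have := natDegree_mul hu_monic.ne_zero h0
    rw [← hH] at this
    omega
  exact degree_le_natDegree.trans (by exact_mod_cast hHl)
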